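/- Consider n cells of q levels and a data alphabet of size L with n < L - 1 and L ≤ 2^(n/16). Any rewriting code over the complete data graph on L values guarantees at most O(n·q·log(n/log L) / log L) rewrites. -/

import Mathlib

/-- `Supports n q L dec upd t`: the rewriting code with decoding map `dec` and update
strategy `upd`, on `n` cells of `q` levels and data alphabet `Fin L` (complete data
graph), guarantees `t` rewrites starting from the all-zero state. -/
def Supports (n q L : ℕ) (dec : (Fin n → ℕ) → Fin L)
    (upd : (Fin n → ℕ) → Fin L → (Fin n → ℕ)) (t : ℕ) : Prop :=
  ∀ v : ℕ → Fin L, v 0 ≠ dec (fun _ => 0) → (∀ i, v (i + 1) ≠ v i) →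
  ∀ s : ℕ → Fin n → ℕ, s 0 = (fun _ => 0) → (∀ i, s (i + 1) = upd (s i) (v i)) →
  ∀ i < t, (∀ j, s i j ≤ s (i + 1) j) ∧ (∀ j, s (i + 1) j ≤ q - 1) ∧ dec (s (i + 1)) = v i

open Finset in
theorem key_lemma (n q L r : ℕ) (hL : 3 ≤ L)
    (hcard : (n + r).choose r + 2 ≤ L)
    (dec : (Fin n → ℕ) → Fin L) (upd : (Fin n → ℕ) → Fin L → (Fin n → ℕ)) (t : ℕ)
    (hS : Supports n q L dec upd t) : t * (r + 1) ≤ n * (q - 1) := by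
  classical
  -- the set of difference vectors with sum ≤ r
  set D : Finset (Fin n → ℕ) :=
    (Fintype.piFinset fun _ : Fin n => Finset.range (r+1)).filter (fun d => ∑ j, d j ≤ r) with hDdef
  have hmemD : ∀ d : Fin n → ℕ, (∑ j, d j ≤ r) → d ∈ D := by
    intro d hd
    rw [hDdef, Finset.mem_filter]
    refine ⟨Fintype.mem_piFinset.2 fun j => ?_, hd⟩
    exact Finset.mem_range.2 (Nat.lt_succ_of_le ((Finset.single_le_sum
      (fun j _ => Nat.zero_le (d j)) (Finset.mem_univ j)).trans hd))
  -- card bound via stars and bars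
  have hD : D.card ≤ (n + r).choose r := by
    have cardhom : ∀ (f : Fin n → Multiset (Option (Fin n))),
        Multiset.card (∑ j, f j) = ∑ j, Multiset.card (f j) :=
      fun f => map_sum (⟨⟨Multiset.card, rfl⟩, Multiset.card_add⟩ :
        Multiset (Option (Fin n)) →+ ℕ) f Finset.univ
    have this : D.card ≤ Fintype.card (Sym (Option (Fin n)) r) := by
      set f : (Fin n → ℕ) → Sym (Option (Fin n)) r := fun d =>
        if hdr : ∑ j, d j ≤ r then
          (⟨(∑ j, Multiset.replicate (d j) (some j)) +
            Multiset.replicate (r - ∑ j, d j) none, by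
              simp [cardhom, Multiset.card_replicate]
              omega⟩ : Sym (Option (Fin n)) r)
        else Sym.replicate r none with hfdef
      have hinj : Set.InjOn f D := by
        intro d1 h1 d2 h2 he
        have h1' : ∑ j, d1 j ≤ r := (Finset.mem_filter.1 (Finset.mem_coe.1 h1)).2
        have h2' : ∑ j, d2 j ≤ r := (Finset.mem_filter.1 (Finset.mem_coe.1 h2)).2
        rw [hfdef] at he
        simp only [dif_pos h1', dif_pos h2'] at he
        funext j
        have hc := congrArg (fun z : Sym (Option (Fin n)) r => Multiset.count (some j) z.1) he
        simpa [h1', h2', Multiset.count_sum', Multiset.count_replicate, Finset.sum_ite_eq] using hc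
      calc D.card ≤ (Finset.univ : Finset (Sym (Option (Fin n)) r)).card :=
            Finset.card_le_card_of_injOn _ (fun a _ => Finset.mem_univ _) hinj
        _ = _ := Finset.card_univ
    rw [Sym.card_sym_eq_choose, Fintype.card_option, Fintype.card_fin] at this
    have he : n + 1 + r - 1 = n + r := by omega
    rwa [he] at this
  -- decoded values to avoid from state x
  set A : (Fin n → ℕ) → Finset (Fin L) := fun x =>
    insert (dec x) ((D.image (fun d j => x j + d j)).image dec) with hAdef
  have hAcard : ∀ x, (A x).card < L := by
    intro x
    calc (A x).card ≤ ((D.image (fun d j => x j + d j)).image dec).card + 1 :=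
          Finset.card_insert_le _ _
      _ ≤ D.card + 1 := by
          have h1 : ((D.image (fun d j => x j + d j)).image dec).card ≤ D.card :=
            Finset.card_image_le.trans Finset.card_image_le
          exact Nat.add_le_add_right h1 1
      _ < L := by omega
  have hbadex : ∀ x, ∃ w : Fin L, w ∉ A x := by
    intro x
    by_contra hcon
    push_neg at hcon
    have h1 : (Finset.univ : Finset (Fin L)).card ≤ (A x).card :=
      Finset.card_le_card (fun w _ => hcon w)
    rw [Finset.card_univ, Fintype.card_fin] at h1
    exact absurd h1 (not_le.2 (hAcard x))
  choose bad hbad using hbadex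
  have hbadne : ∀ x, bad x ≠ dec x := fun x h =>
    hbad x (h ▸ Finset.mem_insert_self _ _)
  have hbadreach : ∀ (x d : Fin n → ℕ), ∑ j, d j ≤ r → dec (fun j => x j + d j) ≠ bad x := by
    intro x d hd h
    exact hbad x (h ▸ Finset.mem_insert_of_mem
      (Finset.mem_image_of_mem dec (Finset.mem_image_of_mem _ (hmemD d hd))))
  haveI : Nontrivial (Fin L) := ⟨⟨0, by omega⟩, ⟨1, by omega⟩, by simp [Fin.ext_iff]⟩
  have haltex : ∀ w : Fin L, ∃ w', w' ≠ w := fun w => exists_ne w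
  choose alt halt using haltex
  -- the adversarial run
  set F : ℕ → (Fin n → ℕ) × Fin L := fun k => Nat.rec ((fun _ => 0), bad (fun _ => 0))
    (fun _ p => ((upd p.1 p.2),
      if bad (upd p.1 p.2) ≠ p.2 then bad (upd p.1 p.2) else alt p.2)) k with hF
  set s : ℕ → Fin n → ℕ := fun k => (F k).1 with hsdef
  set v : ℕ → Fin L := fun k => (F k).2 with hvdef
  have hs0 : s 0 = fun _ => 0 := rfl
  have hstep : ∀ i, s (i+1) = upd (s i) (v i) := fun i => rfl
  have hvsucc : ∀ i, v (i+1) = if bad (s (i+1)) ≠ v i then bad (s (i+1)) else alt (v i) :=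
    fun i => rfl
  have hv0' : v 0 = bad (s 0) := rfl
  have hvne : ∀ i, v (i+1) ≠ v i := by
    intro i
    rw [hvsucc]
    split
    · assumption
    · exact halt (v i)
  have H := hS v (by rw [hv0', hs0]; exact hbadne _) hvne s hs0 hstep
  have hA' : ∀ i, i ≤ t → v i = bad (s i) := by
    intro i hi
    cases i with
    | zero => rfl
    | succ i =>
      have hit : i < t := hi
      have hdec := (H i hit).2.2
      rw [hvsucc]
      rw [if_pos (hdec ▸ hbadne (s (i+1)))]
  have hB : ∀ i, i < t → ∑ j, s i j + (r+1) ≤ ∑ j, s (i+1) j := by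
    intro i hit
    by_contra hcon
    push_neg at hcon
    have hle := (H i hit).1
    set d : Fin n → ℕ := fun j => s (i+1) j - s i j with hd
    have hsum : ∑ j, s i j + ∑ j, d j = ∑ j, s (i+1) j := by
      rw [← Finset.sum_add_distrib]
      exact Finset.sum_congr rfl (fun j _ => Nat.add_sub_cancel' (hle j))
    have hdr : ∑ j, d j ≤ r := by omega
    have hrepr : s (i+1) = fun j => s i j + d j := by
      funext j
      exact (Nat.add_sub_cancel' (hle j)).symm
    have hbr := hbadreach (s i) d hdr
    rw [← hrepr] at hbr
    exact hbr (by rw [(H i hit).2.2, hA' i (le_of_lt hit)])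
  have hsum : ∀ i, i ≤ t → i * (r+1) ≤ ∑ j, s i j := by
    intro i hi
    induction i with
    | zero => simp
    | succ i ih =>
      have h1 := hB i hi
      have h2 := ih (by omega)
      have : (i+1)*(r+1) = i*(r+1) + (r+1) := by ring
      omega
  rcases Nat.eq_zero_or_pos t with ht | ht
  · simp [ht]
  · have h1 := hsum t le_rfl
    have h2 : ∀ j, s t j ≤ q - 1 := by
      have h3 := (H (t-1) (by omega)).2.1
      have he2 : t - 1 + 1 = t := by omega
      rwa [he2] at h3
    have h3 : ∑ j, s t j ≤ n * (q-1) := by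
      calc ∑ j, s t j ≤ ∑ _j : Fin n, (q-1) := Finset.sum_le_sum (fun j _ => h2 j)
        _ = n * (q-1) := by simp [Finset.sum_const, Finset.card_univ, mul_comm]
    omega


lemma aux_pow_factorial : ∀ r : ℕ, ((r:ℝ))^r ≤ 4^r * (r.factorial : ℝ) := by
  intro r
  induction r with
  | zero => simp
  | succ r ih =>
    rcases Nat.eq_zero_or_pos r with hr | hr
    · subst hr; norm_num
    · have hrR : (0:ℝ) < r := by positivity
      have h1 : ((r:ℝ) + 1)^r ≤ 4 * (r:ℝ)^r := by
        have he : ((r:ℝ) + 1) = r * (1 + 1/r) := by field_simp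
        rw [he, mul_pow]
        have h2 : (1 + 1/(r:ℝ))^r ≤ (Real.exp (1/r))^r := by
          apply pow_le_pow_left₀ (by positivity)
          linarith [Real.add_one_le_exp (1/(r:ℝ))]
        have h3 : (Real.exp (1/(r:ℝ)))^r = Real.exp 1 := by
          rw [← Real.exp_nat_mul]
          congr 1
          field_simp
        have h4 : Real.exp 1 ≤ 4 := by
          linarith [Real.exp_one_lt_d9]
        calc (r:ℝ)^r * (1 + 1/(r:ℝ))^r ≤ (r:ℝ)^r * Real.exp 1 := by
              rw [← h3]; exact mul_le_mul_of_nonneg_left h2 (by positivity)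
          _ ≤ 4 * (r:ℝ)^r := by nlinarith [pow_pos hrR r]
      have goal : ((r:ℝ)+1)^(r+1) ≤ 4^(r+1) * ((r+1).factorial : ℝ) := by
        calc ((r:ℝ)+1)^(r+1) = ((r:ℝ)+1) * ((r:ℝ)+1)^r := by ring
          _ ≤ ((r:ℝ)+1) * (4 * (r:ℝ)^r) := by
              exact mul_le_mul_of_nonneg_left h1 (by positivity)
          _ ≤ ((r:ℝ)+1) * (4 * (4^r * (r.factorial : ℝ))) := by
              have h5 := mul_le_mul_of_nonneg_left ih (by norm_num : (0:ℝ) ≤ 4)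
              exact mul_le_mul_of_nonneg_left h5 (by positivity)
          _ = 4^(r+1) * (((r:ℝ)+1) * (r.factorial : ℝ)) := by ring
          _ = 4^(r+1) * ((r+1).factorial : ℝ) := by
              rw [Nat.factorial_succ]; push_cast; ring
      have hcast : (((r+1):ℕ):ℝ) = (r:ℝ)+1 := by push_cast; ring
      rw [hcast]
      exact goal

lemma aux_choose_le (n r : ℕ) (hr : 1 ≤ r) :
    (((n+r).choose r : ℕ) : ℝ) ≤ (4*(n+r)/r)^r := by
  have hfac : ((n+r).choose r : ℝ) * (r.factorial : ℝ) ≤ ((n:ℝ)+r)^r := by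
    have h1 : (n+r).descFactorial r ≤ (n+r)^r := Nat.descFactorial_le_pow _ _
    have h2 : (n+r).descFactorial r = r.factorial * (n+r).choose r :=
      Nat.descFactorial_eq_factorial_mul_choose _ _
    have := h2 ▸ h1
    calc ((n+r).choose r : ℝ) * (r.factorial : ℝ) = ((r.factorial * (n+r).choose r : ℕ) : ℝ) := by
          push_cast; ring
      _ ≤ (((n+r)^r : ℕ) : ℝ) := by exact_mod_cast this
      _ = ((n:ℝ)+r)^r := by push_cast; ring
  have hrR : (0:ℝ) < r := by exact_mod_cast hr
  have hfac2 : ((r:ℝ))^r ≤ 4^r * (r.factorial : ℝ) := aux_pow_factorial r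
  have hfacpos : (0:ℝ) < (r.factorial : ℝ) := by exact_mod_cast r.factorial_pos
  have hch : (0:ℝ) ≤ ((n+r).choose r : ℝ) := by positivity
  rw [div_pow, le_div_iff₀ (by positivity)]
  calc ((n+r).choose r : ℝ) * (r:ℝ)^r ≤ ((n+r).choose r : ℝ) * (4^r * (r.factorial : ℝ)) :=
        mul_le_mul_of_nonneg_left hfac2 hch
    _ = 4^r * (((n+r).choose r : ℝ) * (r.factorial : ℝ)) := by ring
    _ ≤ 4^r * ((n:ℝ)+r)^r := mul_le_mul_of_nonneg_left hfac (by positivity)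
    _ = (4*((n:ℝ)+r))^r := by rw [mul_pow]

set_option maxHeartbeats 1000000 in
/-- Theorem (upper bound, complete data graph): for `1 ≤ n < L - 1` and
`L ≤ 2^(n/16)`, any rewriting code storing `L` values in `n` cells of `q` levels
guarantees at most `O(n·q·log(n/log L) / log L)` rewrites (logs base 2). -/
theorem stmt13 : ∃ K : ℝ, 0 < K ∧ ∀ n q L : ℕ, 1 ≤ n → n < L - 1 →
    (L : ℝ) ≤ (2 : ℝ) ^ ((n : ℝ) / 16) →
    ∀ dec upd t, Supports n q L dec upd t →
    (t : ℝ) ≤ K * (n : ℝ) * (q : ℝ) *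
      Real.logb 2 ((n : ℝ) / Real.logb 2 L) / Real.logb 2 L := by
  have h2pos : (0:ℝ) < 2 := by norm_num
  have h2ne : (2:ℝ) ≠ 1 := by norm_num
  refine ⟨32, by norm_num, ?_⟩
  intro n q L hn1 hnL hL16 dec upd t hS
  have hL3 : 3 ≤ L := by omega
  have hnL' : n + 2 ≤ L := by omega
  set b := Real.logb 2 (L:ℝ) with hbdef
  have hLpos : (0:ℝ) < L := by positivity
  have hb1 : 1 < b := by
    rw [hbdef, show (1:ℝ) = Real.logb 2 2 by simp]
    exact Real.logb_lt_logb (by norm_num) (by norm_num) (by exact_mod_cast (by omega : 2 < L))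
  have hb0 : 0 < b := by linarith
  have hb16 : b ≤ (n:ℝ)/16 := by
    rw [hbdef]
    calc Real.logb 2 (L:ℝ) ≤ Real.logb 2 ((2:ℝ) ^ ((n:ℝ)/16)) :=
          Real.logb_le_logb_of_le (by norm_num) hLpos hL16
      _ = (n:ℝ)/16 := Real.logb_rpow h2pos h2ne
  have hn0 : (0:ℝ) < n := by exact_mod_cast hn1
  have hnb : (16:ℝ) ≤ (n:ℝ)/b := by
    have h16 : b * 16 ≤ (n:ℝ) := (le_div_iff₀ (by norm_num)).1 hb16
    rw [le_div_iff₀ hb0]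
    linarith
  set m := Real.logb 2 ((n:ℝ)/b) with hmdef
  have hm4 : 4 ≤ m := by
    have h16eq : (16:ℝ) = (2:ℝ)^(4:ℝ) := by
      rw [show (4:ℝ) = ((4:ℕ):ℝ) by norm_num, Real.rpow_natCast]; norm_num
    rw [hmdef, show (4:ℝ) = Real.logb 2 ((2:ℝ)^(4:ℝ)) from (Real.logb_rpow h2pos h2ne).symm]
    exact Real.logb_le_logb_of_le (by norm_num) (by norm_num) (h16eq ▸ hnb)
  have hm0 : 0 < m := by linarith
  -- relation to be used at the very end
  have hLB : (L:ℝ) = (2:ℝ)^b := (Real.rpow_logb h2pos h2ne hLpos).symm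
  have hNB : (n:ℝ)/b = (2:ℝ)^m := (Real.rpow_logb h2pos h2ne (by positivity)).symm
  clear_value b m
  set x := b/(32*m) with hxdef
  have hx0 : 0 < x := by positivity
  set r := ⌊x⌋₊ with hrdef
  have hrx : (r:ℝ) ≤ x := Nat.floor_le hx0.le
  have hxr : x < r + 1 := Nat.lt_floor_add_one x
  -- the cardinality condition
  have hcard : (n + r).choose r + 2 ≤ L := by
    rcases Nat.eq_zero_or_pos r with hr0 | hr1
    · rw [hr0]; simpa using hL3
    · -- r ≥ 1 case
      have hrR : (1:ℝ) ≤ r := by exact_mod_cast hr1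
      have hrpos : (0:ℝ) < r := by linarith
      have hx1 : (1:ℝ) ≤ x := le_trans hrR hrx
      have hbm : 32*m ≤ b := by
        have h := (le_div_iff₀ (by positivity : (0:ℝ) < 32*m)).1 hx1
        linarith
      have hb128 : 128 ≤ b := by nlinarith
      have hrn : (r:ℝ) ≤ n := by
        have hxb : x ≤ b := by
          rw [hxdef, div_le_iff₀ (by positivity)]
          nlinarith
        have hbn : b ≤ n := by linarith
        linarith
      -- step 1 : choose ≤ (8n/r)^r
      have h1 : (((n+r).choose r : ℕ) : ℝ) ≤ ((8*n)/r)^r := by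
        refine (aux_choose_le n r hr1).trans ?_
        push_cast
        apply pow_le_pow_left₀ (by positivity)
        exact (div_le_div_iff_of_pos_right hrpos).mpr (by linarith)
      -- step 2 : log split
      have hs : (0:ℝ) < 8*n/r := by positivity
      have hsplit : Real.logb 2 (8*(n:ℝ)/r) = 3 + m + Real.logb 2 (b/r) := by
        have he : 8*(n:ℝ)/r = 8 * ((n:ℝ)/b) * (b/r) := by
          field_simp
        have h8 : Real.logb 2 (8:ℝ) = 3 := by
          rw [show (8:ℝ) = (2:ℝ)^(3:ℝ) by
            rw [show (3:ℝ) = ((3:ℕ):ℝ) by norm_num, Real.rpow_natCast]; norm_num]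
          exact Real.logb_rpow h2pos h2ne
        rw [he, Real.logb_mul (by positivity) (by positivity),
          Real.logb_mul (by positivity) (by positivity), h8, ← hmdef]
      -- bound r*(3+m) ≤ 7b/128
      have hbound1 : (r:ℝ) * (3+m) ≤ 7*b/128 := by
        have h2 : (r:ℝ)*(3+m) ≤ x*(3+m) := by nlinarith
        have h3 : x*(3+m) ≤ 7*b/128 := by
          rw [hxdef, div_mul_eq_mul_div, div_le_div_iff₀ (by positivity) (by norm_num)]
          nlinarith
        linarith
      -- bound r * logb 2 (b/r) ≤ b/4
      have hbound2 : (r:ℝ) * Real.logb 2 (b/(r:ℝ)) ≤ b/4 := by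
        set s := b/(r:ℝ) with hsdef
        have hs32 : 32*m ≤ s := by
          rw [hsdef, le_div_iff₀ hrpos]
          calc 32*m*r ≤ 32*m*x := by nlinarith
            _ = b := by rw [hxdef]; field_simp
        have hs128 : 128 ≤ s := by nlinarith
        have hspos : (0:ℝ) < s := by linarith
        set u := s^((1:ℝ)/3) with hudef
        have hu5 : 5 ≤ u := by
          rw [hudef]
          have h125 : (5:ℝ) = (125:ℝ)^((1:ℝ)/3) := by
            rw [show (125:ℝ) = 5^(3:ℕ) by norm_num, ← Real.rpow_natCast 5 3,
              ← Real.rpow_mul (by norm_num)]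
            norm_num
          rw [h125]
          exact Real.rpow_le_rpow (by norm_num) (by linarith) (by norm_num)
        have hupos : (0:ℝ) < u := by linarith
        have hucube : u^(3:ℕ) = s := by
          rw [hudef, ← Real.rpow_natCast (s^((1:ℝ)/3)) 3, ← Real.rpow_mul hspos.le]
          norm_num
        have hlogs : Real.log s ≤ 3*u := by
          have h4 : Real.log u ≤ u - 1 := Real.log_le_sub_one_of_pos hupos
          have h5 : Real.log s = 3 * Real.log u := by
            rw [← hucube, Real.log_pow]; norm_num
          linarith
        have hlog2 : (0.6931471803:ℝ) < Real.log 2 := Real.log_two_gt_d9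
        have hru : (r:ℝ) = b/s := by
          rw [hsdef]; field_simp
        calc (r:ℝ) * Real.logb 2 s = (b/s) * (Real.log s / Real.log 2) := by
              rw [hru, Real.logb]
          _ ≤ (b/s) * (3*u / Real.log 2) := by
              have hl2 : (0:ℝ) < Real.log 2 := by linarith
              gcongr
          _ = 3*b/(u^(2:ℕ) * Real.log 2) := by
              rw [← hucube]; field_simp
          _ ≤ b/4 := by
              have hl2 : (0:ℝ) < Real.log 2 := by linarith
              have hu2 : (25:ℝ) ≤ u^(2:ℕ) := by nlinarith
              have h12 : (12:ℝ) ≤ u^(2:ℕ) * Real.log 2 := by nlinarith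
              rw [div_le_div_iff₀ (by positivity) (by norm_num)]
              nlinarith [mul_le_mul_of_nonneg_left h12 hb0.le]
      -- combine: choose ≤ 2^(b/2)
      have hE : (r:ℝ) * Real.logb 2 (8*(n:ℝ)/r) ≤ b/2 := by
        rw [hsplit]
        nlinarith
      have hpow : ((8*(n:ℝ))/r)^r ≤ (2:ℝ)^(b/2) := by
        have he : ((8*(n:ℝ))/r)^r = (2:ℝ)^(Real.logb 2 (8*(n:ℝ)/r) * (r:ℝ)) := by
          rw [Real.rpow_mul (by norm_num : (0:ℝ) ≤ 2),
            Real.rpow_logb h2pos h2ne hs, Real.rpow_natCast]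
        rw [he]
        refine Real.rpow_le_rpow_of_exponent_le (by norm_num) ?_
        calc Real.logb 2 (8*(n:ℝ)/r) * (r:ℝ) = (r:ℝ) * Real.logb 2 (8*(n:ℝ)/r) := by ring
          _ ≤ b/2 := hE
      have hfinal : (((n+r).choose r : ℕ) : ℝ) + 2 ≤ (L:ℝ) := by
        have h7 : (2:ℝ)^(b/2) + 2 ≤ (2:ℝ)^b := by
          have h8 : (2:ℝ)^(b/2+1) ≤ (2:ℝ)^b :=
            Real.rpow_le_rpow_of_exponent_le (by norm_num) (by linarith)
          have h9 : (2:ℝ)^(b/2+1) = 2 * (2:ℝ)^(b/2) := by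
            rw [Real.rpow_add h2pos, Real.rpow_one]; ring
          have h10 : (2:ℝ) ≤ (2:ℝ)^(b/2) := by
            calc (2:ℝ) = (2:ℝ)^(1:ℝ) := (Real.rpow_one 2).symm
              _ ≤ _ := Real.rpow_le_rpow_of_exponent_le (by norm_num) (by linarith)
          linarith
        rw [hLB]
        linarith [h1.trans hpow]
      exact_mod_cast hfinal
  -- apply the combinatorial key lemma
  have hkey : t * (r + 1) ≤ n * q := (key_lemma n q L r hL3 hcard dec upd t hS).trans
    (Nat.mul_le_mul_left n (Nat.sub_le q 1))
  have hkeyR : (t:ℝ) * ((r:ℝ)+1) ≤ (n:ℝ) * q := by exact_mod_cast hkey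
  have hr1pos : (0:ℝ) < (r:ℝ)+1 := by positivity
  have ht1 : (t:ℝ) ≤ (n:ℝ)*q / ((r:ℝ)+1) := by
    rw [le_div_iff₀ hr1pos]; exact hkeyR
  have ht2 : (n:ℝ)*q / ((r:ℝ)+1) ≤ (n:ℝ)*q / x :=
    div_le_div_of_nonneg_left (by positivity) hx0 hxr.le
  have ht3 : (n:ℝ)*q / x = 32 * n * q * m / b := by
    rw [hxdef]; field_simp
  calc (t:ℝ) ≤ (n:ℝ)*q / x := ht1.trans ht2
    _ = 32 * (n:ℝ) * (q:ℝ) * m / b := ht3
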